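/- In a compact closed category whose tensor unit is terminal, every identity morphism is disconnected: for every object A, 1_A = ψ ∘ ⊤_A for some state ψ : I → A (whenever A has at least one state). Consequently every morphism of the category is disconnected. -/
import Mathlib


open CategoryTheory MonoidalCategory

/-- In a compact closed category with terminal tensor unit (and at least one state per object),
every identity is disconnected, and consequently every morphism is disconnected. -/
theorem stmt6 {M : Type*} [Category M] [MonoidalCategory M] [SymmetricCategory M]
    (top : ∀ A : M, A ⟶ 𝟙_ M) (huniq : ∀ (A : M) (f : A ⟶ 𝟙_ M), f = top A)
    (d : M → M) (ε : ∀ A : M, A ⊗ d A ⟶ 𝟙_ M) (η : ∀ A : M, 𝟙_ M ⟶ d A ⊗ A)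
    (snake1 : ∀ A : M,
      (ρ_ A).inv ≫ (A ◁ η A) ≫ (α_ A (d A) A).inv ≫ (ε A ▷ A) ≫ (λ_ A).hom = 𝟙 A)
    (snake2 : ∀ A : M,
      (λ_ (d A)).inv ≫ (η A ▷ d A) ≫ (α_ (d A) A (d A)).hom ≫ (d A ◁ ε A) ≫
        (ρ_ (d A)).hom = 𝟙 (d A))
    (hstate : ∀ A : M, Nonempty (𝟙_ M ⟶ A)) :
    (∀ A : M, ∃ ψ : 𝟙_ M ⟶ A, 𝟙 A = top A ≫ ψ) ∧
    (∀ (A B : M) (f : A ⟶ B), ∃ p : 𝟙_ M ⟶ B, f = top A ≫ p) := by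
  have h1 : ∀ A : M, ∃ ψ : 𝟙_ M ⟶ A, 𝟙 A = top A ≫ ψ := by
    intro A
    have hε : ε A = (top A ▷ d A) ≫ (λ_ (d A)).hom ≫ top (d A) :=
      (huniq _ _).trans (huniq _ _).symm
    refine ⟨(ρ_ (𝟙_ M)).inv ≫ (𝟙_ M ◁ η A) ≫ (α_ _ _ _).inv ≫
      (((λ_ (d A)).hom ≫ top (d A)) ▷ A) ≫ (λ_ A).hom, ?_⟩
    rw [← snake1 A, hε]
    rw [comp_whiskerRight]
    slice_lhs 3 4 => rw [← associator_inv_naturality_left]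
    slice_lhs 2 3 => rw [whisker_exchange]
    slice_lhs 1 2 => rw [← rightUnitor_inv_naturality]
    simp
  refine ⟨h1, fun A B f => ?_⟩
  obtain ⟨ψ, hψ⟩ := h1 B
  refine ⟨ψ, ?_⟩
  calc f = f ≫ 𝟙 B := by simp
    _ = f ≫ top B ≫ ψ := by rw [← hψ]
    _ = top A ≫ ψ := by rw [← Category.assoc, ← huniq A (f ≫ top B)]
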